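/- arXiv:1604.04888 — 3 statements merged into one kernel-verified Lean document; each statement's English description precedes it below -/
import Mathlib

section
/- Let Ω ⊆ ℝ² be a bounded open set whose topological boundary ∂Ω has Lebesgue measure zero, and let g : ℝ² → ℂ be continuously differentiable with g(r) = 0 for every r ∈ ∂Ω. Then ∫_Ω ∂g/∂x_j(r) dr = 0 for j = 1, 2. -/
open MeasureTheory Set Metric Filter Topology

lemma segment_inter_frontier {E : Type*} [NormedAddCommGroup E] [NormedSpace ℝ E]
    {Ω : Set E} (hΩ : IsOpen Ω) {a b : E} (ha : a ∈ Ω) (hb : b ∉ Ω) :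
    ∃ y ∈ segment ℝ a b, y ∈ frontier Ω := by
  by_contra h
  push_neg at h
  have hfr : frontier Ω = closure Ω \ Ω := hΩ.frontier_eq
  have hb' : b ∈ (closure Ω)ᶜ := by
    intro hbc
    exact h b (right_mem_segment ℝ a b) (by rw [hfr]; exact ⟨hbc, hb⟩)
  have hsub : segment ℝ a b ⊆ Ω ∪ (closure Ω)ᶜ := by
    intro x hx
    rcases em (x ∈ closure Ω) with hc | hc
    · left
      by_contra hxo
      exact h x hx (by rw [hfr]; exact ⟨hc, hxo⟩)
    · exact Or.inr hc
  obtain ⟨x, -, hx1, hx2⟩ := (convex_segment a b).isPreconnected Ω (closure Ω)ᶜ hΩ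
    isClosed_closure.isOpen_compl hsub ⟨a, left_mem_segment ℝ a b, ha⟩
    ⟨b, right_mem_segment ℝ a b, hb'⟩
  exact hx2 (subset_closure hx1)

lemma norm_sub_le_of_mem_segment' {E : Type*} [NormedAddCommGroup E] [NormedSpace ℝ E]
    {a b y : E} (hy : y ∈ segment ℝ a b) : ‖b - y‖ ≤ ‖b - a‖ := by
  obtain ⟨α, β, hα, hβ, hab, rfl⟩ := hy
  have : b - (α • a + β • b) = α • (b - a) := by
    have hb : b = α • b + β • b := by rw [← add_smul, hab, one_smul]
    rw [smul_sub]
    nth_rewrite 1 [hb]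
    abel
  rw [this, norm_smul, Real.norm_eq_abs, abs_of_nonneg hα]
  nlinarith [norm_nonneg (b - a), hab]

/-- If `Ω ⊆ ℝ²` is a bounded open set whose topological boundary has
Lebesgue measure zero, and `g : ℝ² → ℂ` is continuously differentiable with `g = 0`
on `∂Ω`, then the integral of each partial derivative of `g` over `Ω` vanishes. -/
theorem integral_partial_deriv_eq_zero
    (Ω : Set (ℝ × ℝ)) (hΩopen : IsOpen Ω) (hΩbdd : Bornology.IsBounded Ω)
    (hΩnull : volume (frontier Ω) = 0)
    (g : ℝ × ℝ → ℂ) (hg : ContDiff ℝ 1 g)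
    (hgz : ∀ r ∈ frontier Ω, g r = 0) :
    ∀ j : Fin 2,
      (∫ r in Ω, fderiv ℝ g r (if j = 0 then ((1 : ℝ), (0 : ℝ)) else ((0 : ℝ), (1 : ℝ)))) = 0 := by
  intro j
  set e : ℝ × ℝ := if j = 0 then ((1 : ℝ), (0 : ℝ)) else ((0 : ℝ), (1 : ℝ)) with he
  have hene : ‖e‖ = 1 := by
    rw [he]; split <;> simp [Prod.norm_def]
  -- basic measurability / boundedness facts
  have hΩm : MeasurableSet Ω := hΩopen.measurableSet
  obtain ⟨R', hR'⟩ := hΩbdd.closure.subset_closedBall (0 : ℝ × ℝ)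
  set R : ℝ := max R' 0 with hRdef
  have hR0 : 0 ≤ R := le_max_right _ _
  have hRsub : closure Ω ⊆ closedBall 0 R :=
    hR'.trans (closedBall_subset_closedBall (le_max_left _ _))
  set K : Set (ℝ × ℝ) := closedBall 0 (R + 1) with hKdef
  have hKcomp : IsCompact K := isCompact_closedBall _ _
  have hKconv : Convex ℝ K := convex_closedBall _ _
  have hclK : closure Ω ⊆ K :=
    hRsub.trans (closedBall_subset_closedBall (by linarith))
  have hΩK : Ω ⊆ K := subset_closure.trans hclK
  have hgd : Differentiable ℝ g := hg.differentiable one_ne_zero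
  -- Lipschitz constant
  obtain ⟨C', hC'⟩ := hKcomp.exists_bound_of_continuousOn
    (hg.continuous_fderiv one_ne_zero).continuousOn
  set C : ℝ := max C' 0 with hCdef
  have hC0 : 0 ≤ C := le_max_right _ _
  have hC : ∀ x ∈ K, ‖fderiv ℝ g x‖ ≤ C := fun x hx => (hC' x hx).trans (le_max_left _ _)
  have hlip : ∀ x ∈ K, ∀ y ∈ K, ‖g y - g x‖ ≤ C * ‖y - x‖ := fun x hx y hy =>
    hKconv.norm_image_sub_le_of_norm_fderiv_le (fun z _ => hgd z) hC hx hy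
  -- integrability
  have hgint : IntegrableOn g K := hg.continuous.continuousOn.integrableOn_compact hKcomp
  have hgΩ : IntegrableOn g Ω := hgint.mono_set hΩK
  -- frontier facts
  have hfrK : frontier Ω ⊆ closure Ω := frontier_subset_closure
  have hfin : volume (cthickening 1 (frontier Ω)) ≠ ⊤ :=
    ((hΩbdd.closure.subset hfrK).cthickening).measure_lt_top.ne
  -- the translated sets
  set A : ℝ → Set (ℝ × ℝ) := fun t => (fun x => x - t • e) ⁻¹' Ω with hAdef
  have hAm : ∀ t, MeasurableSet (A t) :=
    fun t => (hΩopen.preimage (continuous_sub_right (t • e))).measurableSet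
  have hAK : ∀ t : ℝ, 0 ≤ t → t ≤ 1 → A t ⊆ K := by
    intro t ht0 ht1 x hx
    have hx' : x - t • e ∈ closedBall 0 R := hRsub (subset_closure hx)
    rw [mem_closedBall_zero_iff] at hx' ⊢
    have : x = (x - t • e) + t • e := by abel
    rw [this]
    calc ‖(x - t • e) + t • e‖ ≤ ‖x - t • e‖ + ‖t • e‖ := norm_add_le _ _
      _ ≤ R + 1 := by
          rw [norm_smul, hene, Real.norm_eq_abs, abs_of_nonneg ht0]
          nlinarith
  -- translation identity
  have htrans : ∀ t : ℝ, ∫ r in Ω, g (r + t • e) = ∫ s in A t, g s := by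
    intro t
    rw [← integral_indicator hΩm, ← integral_indicator (hAm t),
      ← integral_add_right_eq_self ((A t).indicator g) (t • e)]
    congr 1
    funext x
    by_cases hx : x ∈ Ω
    · rw [indicator_of_mem hx, indicator_of_mem]
      simp only [hAdef, mem_preimage, add_sub_cancel_right]
      exact hx
    · rw [indicator_of_notMem hx, indicator_of_notMem]
      simp only [hAdef, mem_preimage, add_sub_cancel_right]
      exact hx
  -- Step A : dominated convergence
  have stepA : Tendsto (fun n : ℕ => ∫ r in Ω, (n : ℝ) • (g (r + (n : ℝ)⁻¹ • e) - g r))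
      atTop (𝓝 (∫ r in Ω, fderiv ℝ g r e)) := by
    apply tendsto_integral_of_dominated_convergence (fun _ => C)
    · intro n
      exact (((hg.continuous.comp (continuous_add_right ((n : ℝ)⁻¹ • e))).sub
        hg.continuous).const_smul ((n : ℝ) : ℝ)).aestronglyMeasurable
    · exact integrableOn_const hΩbdd.measure_lt_top.ne
    · intro n
      rw [ae_restrict_iff' hΩm]
      filter_upwards with r hr
      rcases Nat.eq_zero_or_pos n with rfl | hn
      · simp [hC0]
      · have hn0 : (0 : ℝ) < (n : ℝ) := by exact_mod_cast hn
        have ht0 : 0 ≤ (n : ℝ)⁻¹ := by positivity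
        have ht1 : (n : ℝ)⁻¹ ≤ 1 := by
          rw [inv_le_one_iff₀]; right; exact_mod_cast hn
        have hrK : r ∈ K := hΩK hr
        have hrK' : r + (n : ℝ)⁻¹ • e ∈ K := by
          rw [hKdef, mem_closedBall_zero_iff]
          have hr' : ‖r‖ ≤ R := mem_closedBall_zero_iff.1 (hRsub (subset_closure hr))
          calc ‖r + (n : ℝ)⁻¹ • e‖ ≤ ‖r‖ + ‖(n : ℝ)⁻¹ • e‖ := norm_add_le _ _
            _ ≤ R + 1 := by
                rw [norm_smul, hene, Real.norm_eq_abs, abs_of_nonneg ht0]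
                nlinarith
        have := hlip r hrK _ hrK'
        rw [norm_smul, Real.norm_natCast]
        have heq : ‖r + (n : ℝ)⁻¹ • e - r‖ = (n : ℝ)⁻¹ := by
          rw [add_sub_cancel_left, norm_smul, hene, Real.norm_eq_abs, abs_of_nonneg ht0, mul_one]
        rw [heq] at this
        calc (n : ℝ) * ‖g (r + (n : ℝ)⁻¹ • e) - g r‖ ≤ (n : ℝ) * (C * (n : ℝ)⁻¹) :=
              mul_le_mul_of_nonneg_left this (le_of_lt hn0)
          _ = C := by field_simp
    · filter_upwards with r
      have h1 : HasDerivAt (fun t : ℝ => r + t • e) e 0 := by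
        simpa using ((hasDerivAt_id (0 : ℝ)).smul_const e).const_add r
      have h2 : HasFDerivAt g (fderiv ℝ g r) (r + (0 : ℝ) • e) := by
        simpa using (hgd r).hasFDerivAt
      have hder : HasDerivAt (fun t : ℝ => g (r + t • e)) (fderiv ℝ g r e) 0 := by
        exact h2.comp_hasDerivAt 0 h1
      have hslope := hasDerivAt_iff_tendsto_slope.mp hder
      have hseq : Tendsto (fun n : ℕ => (n : ℝ)⁻¹) atTop (𝓝[≠] (0 : ℝ)) := by
        apply tendsto_nhdsWithin_of_tendsto_nhds_of_eventually_within _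
          tendsto_inv_atTop_nhds_zero_nat
        filter_upwards [eventually_ge_atTop 1] with n hn
        have : (0 : ℝ) < (n : ℝ) := by exact_mod_cast hn
        simp [mem_compl_singleton_iff]
        positivity
      have := hslope.comp hseq
      apply this.congr
      intro n
      simp [slope, Function.comp, inv_inv]
  -- Step B : the quantitative bound
  have stepB : ∀ n : ℕ, 1 ≤ n →
      ‖∫ r in Ω, (n : ℝ) • (g (r + (n : ℝ)⁻¹ • e) - g r)‖ ≤
        2 * C * (volume (cthickening (n : ℝ)⁻¹ (frontier Ω))).toReal := by
    intro n hn
    have hn0 : (0 : ℝ) < (n : ℝ) := by exact_mod_cast hn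
    set t : ℝ := (n : ℝ)⁻¹ with htdef
    have ht0 : 0 < t := by positivity
    have ht1 : t ≤ 1 := by rw [htdef, inv_le_one_iff₀]; right; exact_mod_cast hn
    have hAKt : A t ⊆ K := hAK t ht0.le ht1
    have hgA : IntegrableOn g (A t) := hgint.mono_set hAKt
    have hshift : IntegrableOn (fun r => g (r + t • e)) Ω := by
      have : IntegrableOn (fun r => g (r + t • e)) K :=
        ((hg.continuous.comp (continuous_add_right (t • e))).continuousOn).integrableOn_compact
          hKcomp
      exact this.mono_set hΩK
    have key : (∫ r in Ω, (n : ℝ) • (g (r + t • e) - g r)) =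
        (n : ℝ) • ((∫ s in A t \ Ω, g s) - ∫ s in Ω \ A t, g s) := by
      rw [integral_smul]
      congr 1
      rw [integral_sub hshift hgΩ, htrans t]
      have h1 := integral_inter_add_diff (μ := volume) (f := g) (s := A t) (t := Ω) hΩm hgA
      have h2 := integral_inter_add_diff (μ := volume) (f := g) (s := Ω) (t := A t) (hAm t) hgΩ
      rw [← h1, ← h2, inter_comm]
      ring
    have hpoint : ∀ x, (x ∈ A t \ Ω ∨ x ∈ Ω \ A t) →
        ‖g x‖ ≤ C * t ∧ x ∈ cthickening t (frontier Ω) := by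
      intro x hx
      obtain ⟨y, hyseg, hyfr⟩ : ∃ y, (y ∈ segment ℝ (x - t • e) x) ∧ y ∈ frontier Ω := by
        rcases hx with ⟨hx1, hx2⟩ | ⟨hx1, hx2⟩
        · obtain ⟨y, h1, h2⟩ := segment_inter_frontier hΩopen hx1 hx2
          exact ⟨y, h1, h2⟩
        · obtain ⟨y, h1, h2⟩ := segment_inter_frontier hΩopen hx1 hx2
          exact ⟨y, by rwa [segment_symm], h2⟩
      have hxy : ‖x - y‖ ≤ t := by
        have h := norm_sub_le_of_mem_segment' hyseg
        have hxe : ‖x - (x - t • e)‖ = t := by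
          rw [sub_sub_cancel, norm_smul, hene, Real.norm_eq_abs, abs_of_nonneg ht0.le, mul_one]
        rwa [hxe] at h
      constructor
      · have hyK : y ∈ K := hclK (frontier_subset_closure hyfr)
        have hxK : x ∈ K := by
          rw [hKdef, mem_closedBall_zero_iff]
          have hy' : ‖y‖ ≤ R := mem_closedBall_zero_iff.1 (hRsub (frontier_subset_closure hyfr))
          calc ‖x‖ = ‖y + (x - y)‖ := by congr 1; abel
            _ ≤ ‖y‖ + ‖x - y‖ := norm_add_le _ _
            _ ≤ R + 1 := by nlinarith
        have h := hlip y hyK x hxK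
        rw [hgz y hyfr, sub_zero] at h
        calc ‖g x‖ ≤ C * ‖x - y‖ := h
          _ ≤ C * t := by nlinarith
      · exact mem_cthickening_of_dist_le x y t _ hyfr (by rw [dist_eq_norm]; exact hxy)
    set V : ℝ := (volume (cthickening t (frontier Ω))).toReal with hVdef
    have hVfin : volume (cthickening t (frontier Ω)) ≠ ⊤ :=
      (lt_of_le_of_lt (measure_mono (cthickening_mono ht1 _)) hfin.lt_top).ne
    have hbound : ∀ S : Set (ℝ × ℝ), MeasurableSet S →
        (∀ x ∈ S, x ∈ A t \ Ω ∨ x ∈ Ω \ A t) → ‖∫ s in S, g s‖ ≤ C * t * V := by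
      intro S hSm hS
      have hsub : S ⊆ cthickening t (frontier Ω) := fun x hx => (hpoint x (hS x hx)).2
      have hSfin : volume S < ⊤ := lt_of_le_of_lt (measure_mono hsub) hVfin.lt_top
      calc ‖∫ s in S, g s‖ ≤ (C * t) * (volume S).toReal :=
            norm_setIntegral_le_of_norm_le_const hSfin
              (fun x hx => (hpoint x (hS x hx)).1)
        _ ≤ C * t * V := by
            apply mul_le_mul_of_nonneg_left _ (by positivity)
            exact ENNReal.toReal_mono hVfin (measure_mono hsub)
    have hint1 : ‖∫ s in A t \ Ω, g s‖ ≤ C * t * V :=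
      hbound _ ((hAm t).diff hΩm) (fun x hx => Or.inl hx)
    have hint2 : ‖∫ s in Ω \ A t, g s‖ ≤ C * t * V :=
      hbound _ (hΩm.diff (hAm t)) (fun x hx => Or.inr hx)
    have hnt : (n : ℝ) * t = 1 := mul_inv_cancel₀ (ne_of_gt hn0)
    rw [key, norm_smul, Real.norm_natCast]
    calc (n : ℝ) * ‖(∫ s in A t \ Ω, g s) - ∫ s in Ω \ A t, g s‖
        ≤ (n : ℝ) * (C * t * V + C * t * V) :=
          mul_le_mul_of_nonneg_left ((norm_sub_le _ _).trans (add_le_add hint1 hint2)) hn0.le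
      _ = 2 * C * V * ((n : ℝ) * t) := by ring
      _ = 2 * C * V := by rw [hnt, mul_one]
  -- Step C : the bound tends to 0
  have stepC : Tendsto
      (fun n : ℕ => 2 * C * (volume (cthickening (n : ℝ)⁻¹ (frontier Ω))).toReal)
      atTop (𝓝 0) := by
    have h1 : Tendsto (fun δ : ℝ => volume (cthickening δ (frontier Ω))) (𝓝 0)
        (𝓝 0) := by
      have := tendsto_measure_cthickening_of_isClosed ⟨1, one_pos, hfin⟩ isClosed_frontier
      rwa [hΩnull] at this
    have h2 := h1.comp tendsto_inv_atTop_nhds_zero_nat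
    have h3 : Tendsto (fun n : ℕ => (volume (cthickening (n : ℝ)⁻¹ (frontier Ω))).toReal)
        atTop (𝓝 0) := by
      have h4 := (ENNReal.tendsto_toReal (a := 0) (by simp)).comp h2
      exact h4
    simpa using h3.const_mul (2 * C)
  have hzero : Tendsto (fun n : ℕ => ∫ r in Ω, (n : ℝ) • (g (r + (n : ℝ)⁻¹ • e) - g r))
      atTop (𝓝 0) :=
    squeeze_zero_norm' ((eventually_ge_atTop 1).mono stepB) stepC
  exact tendsto_nhds_unique stepA hzero
end

section
/- For every ℓ ∈ ℤ² and every j ∈ {1, 2}, it holds that Σ_{k∈Λ0} c[k] · (ℓ − k)_j · f̂[ℓ − k] = 0, where (ℓ − k)_j denotes the j-th coordinate of ℓ − k ∈ ℤ². -/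
open MeasureTheory

noncomputable section

/-- The complex exponential `e^{2πi k·r}` for `k ∈ ℤ²`, `r ∈ ℝ²`. -/
def efun (k : ℤ × ℤ) (r : ℝ × ℝ) : ℂ :=
  Complex.exp (2 * Real.pi * Complex.I * ((k.1 : ℝ) * r.1 + (k.2 : ℝ) * r.2 : ℝ))

/-- The unit square `[0,1]²`. -/
def square : Set (ℝ × ℝ) := Set.Icc (0, 0) (1, 1)

/-- Fourier coefficients `f̂[k] = ∫_{[0,1]²} f(r) e^{−2πi k·r} dr`. -/
def fourierCoeff2 (f : ℝ × ℝ → ℂ) (k : ℤ × ℤ) : ℂ :=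
  ∫ r in square, f r * efun (-k) r

open Set

lemma efun_cont (m : ℤ × ℤ) : Continuous (efun m) := by
  unfold efun
  fun_prop

lemma efun_add (k m : ℤ × ℤ) (r : ℝ × ℝ) : efun (k + m) r = efun k r * efun m r := by
  unfold efun
  rw [← Complex.exp_add]
  congr 1
  push_cast [Prod.fst_add, Prod.snd_add]
  ring

lemma efun_hasDerivAt_fst (m : ℤ × ℤ) (y x : ℝ) :
    HasDerivAt (fun t : ℝ => efun m (t, y))
      (2 * Real.pi * Complex.I * (m.1 : ℂ) * efun m (x, y)) x := by
  have h0 : (fun t : ℝ => efun m (t, y)) = fun t : ℝ =>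
      Complex.exp ((2 * Real.pi * Complex.I * (m.1 : ℂ)) * (t : ℂ)
        + (2 * Real.pi * Complex.I * (m.2 : ℂ)) * (y : ℂ)) := by
    funext t
    unfold efun
    congr 1
    push_cast
    ring
  rw [h0]
  have h1 : HasDerivAt (fun t : ℝ => (t : ℂ)) 1 x := by
    exact Complex.ofRealCLM.hasDerivAt
  have h2 := (((h1.const_mul (2 * Real.pi * Complex.I * (m.1 : ℂ))).add_const
      ((2 * Real.pi * Complex.I * (m.2 : ℂ)) * (y : ℂ))).cexp)
  convert h2 using 1
  unfold efun
  rw [mul_one, mul_comm]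
  congr 1
  push_cast
  ring

lemma efun_hasDerivAt_snd (m : ℤ × ℤ) (x y : ℝ) :
    HasDerivAt (fun t : ℝ => efun m (x, t))
      (2 * Real.pi * Complex.I * (m.2 : ℂ) * efun m (x, y)) y := by
  have h0 : (fun t : ℝ => efun m (x, t)) = fun t : ℝ =>
      Complex.exp ((2 * Real.pi * Complex.I * (m.2 : ℂ)) * (t : ℂ)
        + (2 * Real.pi * Complex.I * (m.1 : ℂ)) * (x : ℂ)) := by
    funext t
    unfold efun
    congr 1
    push_cast
    ring
  rw [h0]
  have h1 : HasDerivAt (fun t : ℝ => (t : ℂ)) 1 y := by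
    exact Complex.ofRealCLM.hasDerivAt
  have h2 := (((h1.const_mul (2 * Real.pi * Complex.I * (m.2 : ℂ))).add_const
      ((2 * Real.pi * Complex.I * (m.1 : ℂ)) * (x : ℂ))).cexp)
  convert h2 using 1
  unfold efun
  rw [mul_one, mul_comm]
  congr 1
  push_cast
  ring


-- open bounded nonempty ordconnected set in ℝ is an Ioo
lemma eq_Ioo_of_open (U : Set ℝ) (hU : IsOpen U) (hb : Bornology.IsBounded U)
    (hne : U.Nonempty) (hoc : U.OrdConnected) :
    U = Set.Ioo (sInf U) (sSup U) := by
  have hba : BddAbove U := hb.bddAbove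
  have hbb : BddBelow U := hb.bddBelow
  apply Subset.antisymm
  · intro x hx
    constructor
    · rcases csInf_le hbb hx |>.lt_or_eq with h | h
      · exact h
      · exfalso
        rcases Metric.isOpen_iff.1 hU x hx with ⟨ε, hε, hball⟩
        have : x - ε/2 ∈ U := by
          apply hball
          simp [Real.ball_eq_Ioo]
          constructor <;> nlinarith
        have := csInf_le hbb this
        rw [← h] at this
        linarith
    · rcases le_csSup hba hx |>.lt_or_eq with h | h
      · exact h
      · exfalso
        rcases Metric.isOpen_iff.1 hU x hx with ⟨ε, hε, hball⟩
        have : x + ε/2 ∈ U := by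
          apply hball
          simp [Real.ball_eq_Ioo]
          constructor <;> nlinarith
        have := le_csSup hba this
        rw [h] at this
        linarith
  · rintro x ⟨h1, h2⟩
    obtain ⟨u, hu, hu2⟩ := exists_lt_of_csInf_lt hne h1
    obtain ⟨v, hv, hv2⟩ := exists_lt_of_lt_csSup hne h2
    exact hoc.out hu hv ⟨hu2.le, hv2.le⟩

-- component endpoints are in frontier
lemma inf_not_mem (U : Set ℝ) (hU : IsOpen U) {x : ℝ} (hx : x ∈ U)
    {a b : ℝ} (hab : a < b) (hC : connectedComponentIn U x = Set.Ioo a b)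
    (ha : a ∈ U) : False := by
  rcases Metric.isOpen_iff.1 hU a ha with ⟨ε, hε, hball⟩
  set w := min b (a + ε) with hw
  have haw : a < w := lt_min hab (by linarith)
  have hmid : (a + w)/2 ∈ Set.Ioo a b := by
    constructor
    · linarith
    · have : w ≤ b := min_le_left _ _
      linarith
  have hmidball : (a + w)/2 ∈ Metric.ball a ε := by
    rw [Real.ball_eq_Ioo]
    have : w ≤ a + ε := min_le_right _ _
    constructor <;> nlinarith
  have hunion : IsPreconnected (Metric.ball a ε ∪ Set.Ioo a b) := by
    apply IsPreconnected.union ((a+w)/2) hmidball hmid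
    · rw [Real.ball_eq_Ioo]; exact isPreconnected_Ioo
    · exact isPreconnected_Ioo
  have hsubU : Metric.ball a ε ∪ Set.Ioo a b ⊆ U := by
    rintro y (hy | hy)
    · exact hball hy
    · rw [← hC] at hy; exact connectedComponentIn_subset U x hy
  have hxin : x ∈ Metric.ball a ε ∪ Set.Ioo a b := by
    right; rw [← hC]; exact mem_connectedComponentIn hx
  have := hunion.subset_connectedComponentIn hxin hsubU
  rw [hC] at this
  have : a ∈ Set.Ioo a b := this (Or.inl (Metric.mem_ball_self hε))
  exact lt_irrefl a this.1

lemma sup_not_mem (U : Set ℝ) (hU : IsOpen U) {x : ℝ} (hx : x ∈ U)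
    {a b : ℝ} (hab : a < b) (hC : connectedComponentIn U x = Set.Ioo a b)
    (hb : b ∈ U) : False := by
  rcases Metric.isOpen_iff.1 hU b hb with ⟨ε, hε, hball⟩
  set w := max a (b - ε) with hw
  have hwb : w < b := max_lt hab (by linarith)
  have hmid : (w + b)/2 ∈ Set.Ioo a b := by
    constructor
    · have : a ≤ w := le_max_left _ _
      linarith
    · linarith
  have hmidball : (w + b)/2 ∈ Metric.ball b ε := by
    rw [Real.ball_eq_Ioo]
    have : b - ε ≤ w := le_max_right _ _
    constructor <;> nlinarith
  have hunion : IsPreconnected (Metric.ball b ε ∪ Set.Ioo a b) := by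
    apply IsPreconnected.union ((w+b)/2) hmidball hmid
    · rw [Real.ball_eq_Ioo]; exact isPreconnected_Ioo
    · exact isPreconnected_Ioo
  have hsubU : Metric.ball b ε ∪ Set.Ioo a b ⊆ U := by
    rintro y (hy | hy)
    · exact hball hy
    · rw [← hC] at hy; exact connectedComponentIn_subset U x hy
  have hxin : x ∈ Metric.ball b ε ∪ Set.Ioo a b := by
    right; rw [← hC]; exact mem_connectedComponentIn hx
  have := hunion.subset_connectedComponentIn hxin hsubU
  rw [hC] at this
  have : b ∈ Set.Ioo a b := this (Or.inl (Metric.mem_ball_self hε))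
  exact lt_irrefl b this.2

-- key 1D lemma
lemma integral_deriv_zero (U : Set ℝ) (hU : IsOpen U) (hb : Bornology.IsBounded U)
    (h h' : ℝ → ℂ) (hd : ∀ x, HasDerivAt h (h' x) x) (hc : Continuous h')
    (hfr : ∀ x ∈ frontier U, h x = 0) :
    ∫ x in U, h' x = 0 := by
  rcases U.eq_empty_or_nonempty with rfl | ⟨x₀, hx₀⟩
  · simp
  -- each component integrates to zero
  have hcomp : ∀ x ∈ U, ∫ t in connectedComponentIn U x, h' t = 0 := by
    intro x hx
    set C := connectedComponentIn U x with hCdef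
    have hCopen : IsOpen C := hU.connectedComponentIn
    have hCsub : C ⊆ U := connectedComponentIn_subset U x
    have hCne : C.Nonempty := ⟨x, mem_connectedComponentIn hx⟩
    have hCbd : Bornology.IsBounded C := hb.subset hCsub
    have hCoc : C.OrdConnected := isPreconnected_connectedComponentIn.ordConnected
    have hCIoo : C = Set.Ioo (sInf C) (sSup C) := eq_Ioo_of_open C hCopen hCbd hCne hCoc
    set a := sInf C
    set b := sSup C
    have hab : a < b := by
      rcases hCne with ⟨y, hy⟩
      rw [hCIoo] at hy
      exact lt_trans hy.1 hy.2
    have hafr : a ∈ frontier U := by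
      rw [hU.frontier_eq]
      exact ⟨closure_mono hCsub (csInf_mem_closure hCne hCbd.bddBelow),
        fun haU => inf_not_mem U hU hx hab hCIoo haU⟩
    have hbfr : b ∈ frontier U := by
      rw [hU.frontier_eq]
      exact ⟨closure_mono hCsub (csSup_mem_closure hCne hCbd.bddAbove),
        fun hbU => sup_not_mem U hU hx hab hCIoo hbU⟩
    rw [hCIoo, ← MeasureTheory.integral_Ioc_eq_integral_Ioo,
      ← intervalIntegral.integral_of_le hab.le]
    rw [intervalIntegral.integral_eq_sub_of_hasDerivAt (fun t _ => hd t)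
      (hc.intervalIntegrable a b)]
    rw [hfr a hafr, hfr b hbfr, sub_zero]
  -- decompose U into components
  set T : Set (Set ℝ) := (connectedComponentIn U) '' U with hT
  have hTdisj : T.PairwiseDisjoint id := by
    rintro C ⟨y, hy, rfl⟩ D ⟨z, hz, rfl⟩ hne
    rw [Function.onFun, Set.disjoint_left]
    intro w hw hw2
    exact hne (by rw [connectedComponentIn_eq hw, connectedComponentIn_eq hw2])
  have hTcount : T.Countable := by
    apply hTdisj.countable_of_isOpen
    · rintro C ⟨y, hy, rfl⟩; exact hU.connectedComponentIn
    · rintro C ⟨y, hy, rfl⟩; exact ⟨y, mem_connectedComponentIn hy⟩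
  have : Countable T := hTcount.to_subtype
  have hUnion : ⋃ (C : T), (C : Set ℝ) = U := by
    apply Subset.antisymm
    · rintro w hw
      rcases Set.mem_iUnion.1 hw with ⟨⟨C, y, hy, rfl⟩, hwC⟩
      exact connectedComponentIn_subset U y hwC
    · intro w hw
      exact Set.mem_iUnion.2 ⟨⟨_, ⟨w, hw, rfl⟩⟩, mem_connectedComponentIn hw⟩
  have hint : IntegrableOn h' U := by
    have : IntegrableOn h' (closure U) :=
      hc.continuousOn.integrableOn_compact hb.isCompact_closure
    exact this.mono_set subset_closure
  have hmeas : ∀ C : T, MeasurableSet (C : Set ℝ) := by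
    rintro ⟨C, y, hy, rfl⟩
    exact hU.connectedComponentIn.measurableSet
  have hdisj2 : Pairwise (Function.onFun Disjoint (fun C : T => (C : Set ℝ))) := by
    intro C D hne
    exact hTdisj C.2 D.2 (fun hh => hne (Subtype.ext hh))
  rw [← hUnion, MeasureTheory.integral_iUnion hmeas hdisj2 (hUnion ▸ hint)]
  have hz : ∀ C : T, ∫ t in (C : Set ℝ), h' t = 0 := by
    rintro ⟨C, y, hy, rfl⟩
    exact hcomp y hy
  simp [hz]

-- 2D lemma, derivative in first coordinate
lemma integral_partial_fst_zero (Ω : Set (ℝ × ℝ)) (hopen : IsOpen Ω)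
    (hsub : Ω ⊆ Set.Ioo (0:ℝ) 1 ×ˢ Set.Ioo (0:ℝ) 1)
    (G G' : ℝ × ℝ → ℂ)
    (hd : ∀ y x, HasDerivAt (fun x => G (x, y)) (G' (x, y)) x)
    (hc : Continuous G') (hG : Continuous G)
    (hfr : ∀ r ∈ frontier Ω, G r = 0) :
    ∫ r in Ω, G' r = 0 := by
  have hmeas : MeasurableSet Ω := hopen.measurableSet
  have hbd : Bornology.IsBounded Ω :=
    ((Metric.isBounded_Ioo (0:ℝ) 1).prod (Metric.isBounded_Ioo (0:ℝ) 1)).subset hsub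
  have hint : IntegrableOn G' Ω :=
    (hc.continuousOn.integrableOn_compact hbd.isCompact_closure).mono_set subset_closure
  have hind : Integrable (Ω.indicator G') volume := hint.integrable_indicator hmeas
  rw [← MeasureTheory.integral_indicator hmeas]
  rw [Measure.volume_eq_prod] at hind ⊢
  rw [MeasureTheory.integral_prod_symm _ hind]
  have inner : ∀ y : ℝ, (∫ x : ℝ, Ω.indicator G' (x, y)) = 0 := by
    intro y
    set U : Set ℝ := (fun x => (x, y)) ⁻¹' Ω with hUdef
    have hcont : Continuous (fun x : ℝ => (x, y)) := continuous_id.prodMk continuous_const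
    have hUopen : IsOpen U := hopen.preimage hcont
    have hUbd : Bornology.IsBounded U := by
      apply (Metric.isBounded_Ioo (0:ℝ) 1).subset
      intro x hx
      exact (hsub hx).1
    have heq : ∀ x : ℝ, Ω.indicator G' (x, y) = U.indicator (fun x => G' (x, y)) x := by
      intro x
      by_cases hxy : (x, y) ∈ Ω
      · rw [Set.indicator_of_mem hxy, Set.indicator_of_mem (show x ∈ U from hxy)]
      · rw [Set.indicator_of_notMem hxy, Set.indicator_of_notMem (show x ∉ U from hxy)]
    simp_rw [heq]
    rw [MeasureTheory.integral_indicator hUopen.measurableSet]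
    apply integral_deriv_zero U hUopen hUbd _ _ (hd y) (hc.comp hcont)
    intro x hx
    apply hfr
    rw [hopen.frontier_eq]
    rw [hUopen.frontier_eq] at hx
    exact ⟨hcont.closure_preimage_subset Ω hx.1, hx.2⟩
  simp_rw [inner]
  simp

-- 2D lemma, derivative in second coordinate
lemma integral_partial_snd_zero (Ω : Set (ℝ × ℝ)) (hopen : IsOpen Ω)
    (hsub : Ω ⊆ Set.Ioo (0:ℝ) 1 ×ˢ Set.Ioo (0:ℝ) 1)
    (G G' : ℝ × ℝ → ℂ)
    (hd : ∀ x y, HasDerivAt (fun y => G (x, y)) (G' (x, y)) y)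
    (hc : Continuous G') (hG : Continuous G)
    (hfr : ∀ r ∈ frontier Ω, G r = 0) :
    ∫ r in Ω, G' r = 0 := by
  have hmeas : MeasurableSet Ω := hopen.measurableSet
  have hbd : Bornology.IsBounded Ω :=
    ((Metric.isBounded_Ioo (0:ℝ) 1).prod (Metric.isBounded_Ioo (0:ℝ) 1)).subset hsub
  have hint : IntegrableOn G' Ω :=
    (hc.continuousOn.integrableOn_compact hbd.isCompact_closure).mono_set subset_closure
  have hind : Integrable (Ω.indicator G') volume := hint.integrable_indicator hmeas
  rw [← MeasureTheory.integral_indicator hmeas]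
  rw [Measure.volume_eq_prod] at hind ⊢
  rw [MeasureTheory.integral_prod _ hind]
  have inner : ∀ x : ℝ, (∫ y : ℝ, Ω.indicator G' (x, y)) = 0 := by
    intro x
    set U : Set ℝ := (fun y => (x, y)) ⁻¹' Ω with hUdef
    have hcont : Continuous (fun y : ℝ => (x, y)) := continuous_const.prodMk continuous_id
    have hUopen : IsOpen U := hopen.preimage hcont
    have hUbd : Bornology.IsBounded U := by
      apply (Metric.isBounded_Ioo (0:ℝ) 1).subset
      intro y hy
      exact (hsub hy).2
    have heq : ∀ y : ℝ, Ω.indicator G' (x, y) = U.indicator (fun y => G' (x, y)) y := by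
      intro y
      by_cases hxy : (x, y) ∈ Ω
      · rw [Set.indicator_of_mem hxy, Set.indicator_of_mem (show y ∈ U from hxy)]
      · rw [Set.indicator_of_notMem hxy, Set.indicator_of_notMem (show y ∉ U from hxy)]
    simp_rw [heq]
    rw [MeasureTheory.integral_indicator hUopen.measurableSet]
    apply integral_deriv_zero U hUopen hUbd _ _ (hd x) (hc.comp hcont)
    intro y hy
    apply hfr
    rw [hopen.frontier_eq]
    rw [hUopen.frontier_eq] at hy
    exact ⟨hcont.closure_preimage_subset Ω hy.1, hy.2⟩
  simp_rw [inner]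
  simp

lemma comp_zero_fst (Ωi : Set (ℝ × ℝ)) (ho : IsOpen Ωi)
    (hs : Ωi ⊆ Set.Ioo (0:ℝ) 1 ×ˢ Set.Ioo (0:ℝ) 1)
    (Λ0 : Finset (ℤ × ℤ)) (c : ℤ × ℤ → ℂ) (ℓ : ℤ × ℤ)
    (hed : ∀ r ∈ frontier Ωi, (∑ k ∈ Λ0, c k * efun k r) = 0) :
    ∑ k ∈ Λ0, c k * ((ℓ - k).1 : ℂ) * ∫ r in Ωi, efun (k - ℓ) r = 0 := by
  have hbd : Bornology.IsBounded Ωi :=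
    ((Metric.isBounded_Ioo (0:ℝ) 1).prod (Metric.isBounded_Ioo (0:ℝ) 1)).subset hs
  have hIof : ∀ g : ℝ × ℝ → ℂ, Continuous g → IntegrableOn g Ωi := fun g hg =>
    (hg.continuousOn.integrableOn_compact hbd.isCompact_closure).mono_set subset_closure
  have hzero : ∫ r in Ωi,
      (∑ k ∈ Λ0, c k * (2 * Real.pi * Complex.I * ((k - ℓ).1 : ℂ) * efun (k - ℓ) r)) = 0 := by
    apply integral_partial_fst_zero Ωi ho hs (fun r => ∑ k ∈ Λ0, c k * efun (k - ℓ) r)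
    · intro y x
      apply HasDerivAt.fun_sum
      intro k _
      exact (efun_hasDerivAt_fst (k - ℓ) y x).const_mul (c k)
    · apply continuous_finset_sum
      intro k _
      exact continuous_const.mul (continuous_const.mul (efun_cont _))
    · apply continuous_finset_sum
      intro k _
      exact continuous_const.mul (efun_cont _)
    · intro r hr
      have hμ : (∑ k ∈ Λ0, c k * efun k r) = 0 := hed r hr
      have hGe : (∑ k ∈ Λ0, c k * efun (k - ℓ) r)
          = (∑ k ∈ Λ0, c k * efun k r) * efun (-ℓ) r := by
        rw [Finset.sum_mul]
        apply Finset.sum_congr rfl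
        intro k _
        rw [mul_assoc, ← efun_add, sub_eq_add_neg]
      rw [hGe, hμ, zero_mul]
  have hstep : ∀ k ∈ Λ0, c k * ((ℓ - k).1 : ℂ) * ∫ r in Ωi, efun (k - ℓ) r
      = (-(2 * Real.pi * Complex.I))⁻¹ *
        ∫ r in Ωi, c k * (2 * Real.pi * Complex.I * ((k - ℓ).1 : ℂ) * efun (k - ℓ) r) := by
    intro k _
    rw [MeasureTheory.integral_const_mul, MeasureTheory.integral_const_mul]
    have hπ : (Real.pi : ℂ) ≠ 0 := Complex.ofReal_ne_zero.2 Real.pi_ne_zero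
    have hm : ((ℓ - k).1 : ℂ) = -(((k - ℓ).1 : ℂ)) := by
      push_cast [Prod.fst_sub]
      ring
    rw [hm]
    field_simp [Complex.I_ne_zero]
  rw [Finset.sum_congr rfl hstep, ← Finset.mul_sum, ← MeasureTheory.integral_finset_sum]
  · rw [hzero, mul_zero]
  · intro k _
    exact hIof _ (continuous_const.mul (continuous_const.mul (efun_cont _)))

lemma comp_zero_snd (Ωi : Set (ℝ × ℝ)) (ho : IsOpen Ωi)
    (hs : Ωi ⊆ Set.Ioo (0:ℝ) 1 ×ˢ Set.Ioo (0:ℝ) 1)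
    (Λ0 : Finset (ℤ × ℤ)) (c : ℤ × ℤ → ℂ) (ℓ : ℤ × ℤ)
    (hed : ∀ r ∈ frontier Ωi, (∑ k ∈ Λ0, c k * efun k r) = 0) :
    ∑ k ∈ Λ0, c k * ((ℓ - k).2 : ℂ) * ∫ r in Ωi, efun (k - ℓ) r = 0 := by
  have hbd : Bornology.IsBounded Ωi :=
    ((Metric.isBounded_Ioo (0:ℝ) 1).prod (Metric.isBounded_Ioo (0:ℝ) 1)).subset hs
  have hIof : ∀ g : ℝ × ℝ → ℂ, Continuous g → IntegrableOn g Ωi := fun g hg =>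
    (hg.continuousOn.integrableOn_compact hbd.isCompact_closure).mono_set subset_closure
  have hzero : ∫ r in Ωi,
      (∑ k ∈ Λ0, c k * (2 * Real.pi * Complex.I * ((k - ℓ).2 : ℂ) * efun (k - ℓ) r)) = 0 := by
    apply integral_partial_snd_zero Ωi ho hs (fun r => ∑ k ∈ Λ0, c k * efun (k - ℓ) r)
    · intro x y
      apply HasDerivAt.fun_sum
      intro k _
      exact (efun_hasDerivAt_snd (k - ℓ) x y).const_mul (c k)
    · apply continuous_finset_sum
      intro k _
      exact continuous_const.mul (continuous_const.mul (efun_cont _))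
    · apply continuous_finset_sum
      intro k _
      exact continuous_const.mul (efun_cont _)
    · intro r hr
      have hμ : (∑ k ∈ Λ0, c k * efun k r) = 0 := hed r hr
      have hGe : (∑ k ∈ Λ0, c k * efun (k - ℓ) r)
          = (∑ k ∈ Λ0, c k * efun k r) * efun (-ℓ) r := by
        rw [Finset.sum_mul]
        apply Finset.sum_congr rfl
        intro k _
        rw [mul_assoc, ← efun_add, sub_eq_add_neg]
      rw [hGe, hμ, zero_mul]
  have hstep : ∀ k ∈ Λ0, c k * ((ℓ - k).2 : ℂ) * ∫ r in Ωi, efun (k - ℓ) r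
      = (-(2 * Real.pi * Complex.I))⁻¹ *
        ∫ r in Ωi, c k * (2 * Real.pi * Complex.I * ((k - ℓ).2 : ℂ) * efun (k - ℓ) r) := by
    intro k _
    rw [MeasureTheory.integral_const_mul, MeasureTheory.integral_const_mul]
    have hπ : (Real.pi : ℂ) ≠ 0 := Complex.ofReal_ne_zero.2 Real.pi_ne_zero
    have hm : ((ℓ - k).2 : ℂ) = -(((k - ℓ).2 : ℂ)) := by
      push_cast [Prod.snd_sub]
      ring
    rw [hm]
    field_simp [Complex.I_ne_zero]
  rw [Finset.sum_congr rfl hstep, ← Finset.mul_sum, ← MeasureTheory.integral_finset_sum]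
  · rw [hzero, mul_zero]
  · intro k _
    exact hIof _ (continuous_const.mul (continuous_const.mul (efun_cont _)))

/-- For a piecewise constant image `f = Σ aᵢ χ_{Ωᵢ}` whose edge set
`∪ᵢ ∂Ωᵢ` is contained in the zero set of the trigonometric polynomial
`μ0(r) = Σ_{k∈Λ0} c[k] e^{2πi k·r}`, the Fourier-domain annihilation relation
`Σ_{k∈Λ0} c[k]·(ℓ−k)ⱼ·f̂[ℓ−k] = 0` holds for every `ℓ ∈ ℤ²` and `j ∈ {1,2}`. -/
theorem fourier_annihilation
    (N : ℕ) (a : Fin N → ℂ) (Ω : Fin N → Set (ℝ × ℝ))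
    (hopen : ∀ i, IsOpen (Ω i)) (hbdd : ∀ i, Bornology.IsBounded (Ω i))
    (hsub : ∀ i, Ω i ⊆ Set.Ioo (0 : ℝ) 1 ×ˢ Set.Ioo (0 : ℝ) 1)
    (hdisj : Pairwise (fun i j => Disjoint (Ω i) (Ω j)))
    (hnull : ∀ i, volume (frontier (Ω i)) = 0)
    (Λ0 : Finset (ℤ × ℤ)) (hΛ0 : Λ0.Nonempty)
    (c : ℤ × ℤ → ℂ) (hcsupp : ∀ k ∉ Λ0, c k = 0) (hc : ∃ k ∈ Λ0, c k ≠ 0)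
    (f : ℝ × ℝ → ℂ) (hf : f = fun r => ∑ i, (Ω i).indicator (fun _ => a i) r)
    (hedge : (⋃ i, frontier (Ω i)) ⊆
      {r ∈ square | (∑ k ∈ Λ0, c k * efun k r) = 0}) :
    ∀ (ℓ : ℤ × ℤ) (j : Fin 2),
      ∑ k ∈ Λ0, c k *
        (if j = 0 then ((ℓ - k).1 : ℂ) else ((ℓ - k).2 : ℂ)) *
        fourierCoeff2 f (ℓ - k) = 0 := by
  intro ℓ j
  have hΩsq : ∀ i, Ω i ⊆ square := by
    intro i
    refine (hsub i).trans ?_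
    rw [square, Set.Icc_prod_eq]
    exact Set.prod_mono Set.Ioo_subset_Icc_self Set.Ioo_subset_Icc_self
  have hIof : ∀ i, ∀ g : ℝ × ℝ → ℂ, Continuous g → IntegrableOn g (Ω i) := fun i g hg =>
    (hg.continuousOn.integrableOn_compact (hbdd i).isCompact_closure).mono_set subset_closure
  have hfc : ∀ m : ℤ × ℤ, fourierCoeff2 f m = ∑ i, a i * ∫ r in Ω i, efun (-m) r := by
    intro m
    simp only [fourierCoeff2, hf]
    have heq : ∀ r : ℝ × ℝ, (∑ i, (Ω i).indicator (fun _ => a i) r) * efun (-m) r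
        = ∑ i, (Ω i).indicator (fun r => a i * efun (-m) r) r := by
      intro r
      rw [Finset.sum_mul]
      exact Finset.sum_congr rfl fun i _ => (Set.indicator_mul_left _ _ _).symm
    simp_rw [heq]
    rw [MeasureTheory.integral_finset_sum]
    · apply Finset.sum_congr rfl
      intro i _
      rw [MeasureTheory.setIntegral_indicator ((hopen i).measurableSet),
        Set.inter_eq_self_of_subset_right (hΩsq i),
        MeasureTheory.integral_const_mul]
    · intro i _
      apply Integrable.restrict
      exact ((hIof i _ (continuous_const.mul (efun_cont (-m)))).integrable_indicator
        ((hopen i).measurableSet))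
  have hed : ∀ i, ∀ r ∈ frontier (Ω i), (∑ k ∈ Λ0, c k * efun k r) = 0 := by
    intro i r hr
    exact (hedge (Set.mem_iUnion.2 ⟨i, hr⟩)).2
  have hswap : ∀ P : ℤ × ℤ → ℂ,
      (∑ k ∈ Λ0, c k * P k * ∑ i, a i * ∫ r in Ω i, efun (k - ℓ) r)
      = ∑ i, a i * ∑ k ∈ Λ0, c k * P k * ∫ r in Ω i, efun (k - ℓ) r := by
    intro P
    calc (∑ k ∈ Λ0, c k * P k * ∑ i, a i * ∫ r in Ω i, efun (k - ℓ) r)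
        = ∑ k ∈ Λ0, ∑ i, a i * (c k * P k * ∫ r in Ω i, efun (k - ℓ) r) := by
          refine Finset.sum_congr rfl fun k _ => ?_
          rw [Finset.mul_sum]
          exact Finset.sum_congr rfl fun i _ => by ring
      _ = ∑ i, ∑ k ∈ Λ0, a i * (c k * P k * ∫ r in Ω i, efun (k - ℓ) r) := Finset.sum_comm
      _ = ∑ i, a i * ∑ k ∈ Λ0, c k * P k * ∫ r in Ω i, efun (k - ℓ) r := by
          exact Finset.sum_congr rfl fun i _ => (Finset.mul_sum _ _ _).symm
  by_cases hj : j = 0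
  · simp only [hj, reduceIte]
    simp only [hfc, neg_sub]
    rw [hswap (fun k => ((ℓ - k).1 : ℂ))]
    refine Finset.sum_eq_zero fun i _ => ?_
    rw [comp_zero_fst (Ω i) (hopen i) (hsub i) Λ0 c ℓ (hed i), mul_zero]
  · simp only [if_neg hj]
    simp only [hfc, neg_sub]
    rw [hswap (fun k => ((ℓ - k).2 : ℂ))]
    refine Finset.sum_eq_zero fun i _ => ?_
    rw [comp_zero_snd (Ω i) (hopen i) (hsub i) Λ0 c ℓ (hed i), mul_zero]
end
end

section
/- For every nonempty Θ ⊆ Γ and every matrix X ∈ ℂ^{(2|Λ2|) × |Λ1|}, the constraint Q_Θ(X) = Q_Θ(T(f̂)) holds if and only if there exists ĝ : ℤ² → ℂ with ĝ[k] = f̂[k] for all k ∈ Θ with k ≠ (0,0) such that X = T(ĝ). In particular, the feasible set of the lifted nuclear norm problem (11) coincides with the set of structured matrices built from Fourier data agreeing with the observed samples, so problems (8) and (11) are equivalent. -/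
open scoped ComplexConjugate

noncomputable section

/-- `Γ = {ℓ − k : ℓ ∈ Λ2, k ∈ Λ1}`. -/
def gammaSet (Λ1 Λ2 : Finset (ℤ × ℤ)) : Finset (ℤ × ℤ) :=
  (Λ2 ×ˢ Λ1).image (fun p => p.1 - p.2)

/-- `n(k) = |ω_i(k)|`, the number of positions `(ℓ, k') ∈ Λ2 × Λ1` with `ℓ − k' = k`. -/
def nsize (Λ1 Λ2 : Finset (ℤ × ℤ)) (k : ℤ × ℤ) : ℕ :=
  ((Λ2 ×ˢ Λ1).filter (fun p => p.1 - p.2 = k)).card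

/-- The basis matrix `A_k`: for `k ≠ (0,0)` its block-`i` entry at each position of
`ω_i(k)` equals `kᵢ/(|k|·√n(k))`, with all other entries zero; `A_{(0,0)} = 0`. -/
def Amat (Λ1 Λ2 : Finset (ℤ × ℤ)) (k : ℤ × ℤ) : Matrix (Fin 2 × Λ2) Λ1 ℂ :=
  fun p k' =>
    if k ≠ 0 ∧ (p.2 : ℤ × ℤ) - (k' : ℤ × ℤ) = k then
      (((if p.1 = 0 then (k.1 : ℝ) else (k.2 : ℝ)) /
        (Real.sqrt ((k.1 : ℝ) ^ 2 + (k.2 : ℝ) ^ 2) *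
          Real.sqrt (nsize Λ1 Λ2 k)) : ℝ) : ℂ)
    else 0

/-- Frobenius inner product `⟨X, Y⟩ = trace(Yᴴ X)`. -/
def finner {Λ1 Λ2 : Finset (ℤ × ℤ)} (X Y : Matrix (Fin 2 × Λ2) Λ1 ℂ) : ℂ :=
  ∑ p : Fin 2 × Λ2, ∑ q : Λ1, conj (Y p q) * X p q

/-- `A_Θ(X) = Σ_{k∈Θ} ⟨X, A_k⟩ A_k`. -/
def Aproj (Λ1 Λ2 : Finset (ℤ × ℤ)) (Θ : Finset (ℤ × ℤ))
    (X : Matrix (Fin 2 × Λ2) Λ1 ℂ) : Matrix (Fin 2 × Λ2) Λ1 ℂ :=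
  ∑ k ∈ Θ, finner X (Amat Λ1 Λ2 k) • Amat Λ1 Λ2 k

/-- `A^⊥(X) = X − Σ_{k∈Γ} ⟨X, A_k⟩ A_k`. -/
def Aperp (Λ1 Λ2 : Finset (ℤ × ℤ)) (X : Matrix (Fin 2 × Λ2) Λ1 ℂ) :
    Matrix (Fin 2 × Λ2) Λ1 ℂ :=
  X - Aproj Λ1 Λ2 (gammaSet Λ1 Λ2) X

/-- `Q_Θ(X) = (|Γ|/|Θ|)·A_Θ(X) + A^⊥(X)`. -/
def Qop (Λ1 Λ2 : Finset (ℤ × ℤ)) (Θ : Finset (ℤ × ℤ))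
    (X : Matrix (Fin 2 × Λ2) Λ1 ℂ) : Matrix (Fin 2 × Λ2) Λ1 ℂ :=
  (((gammaSet Λ1 Λ2).card : ℂ) / (Θ.card : ℂ)) • Aproj Λ1 Λ2 Θ X + Aperp Λ1 Λ2 X

/-- The structured matrix `T(ĝ)` with entries `Tᵢ(ĝ)[ℓ,k] = (ℓ−k)ᵢ · ĝ[ℓ−k]`. -/
def Tmat (Λ1 Λ2 : Finset (ℤ × ℤ)) (g : ℤ × ℤ → ℂ) :
    Matrix (Fin 2 × Λ2) Λ1 ℂ := fun p k =>
  (if p.1 = 0 then (((p.2 : ℤ × ℤ) - (k : ℤ × ℤ)).1 : ℂ)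
    else (((p.2 : ℤ × ℤ) - (k : ℤ × ℤ)).2 : ℂ)) * g ((p.2 : ℤ × ℤ) - (k : ℤ × ℤ))

namespace QopAux

/-- weight `w(k) = |k|·√(n(k))`. -/
def wt (Λ1 Λ2 : Finset (ℤ × ℤ)) (k : ℤ × ℤ) : ℝ :=
  Real.sqrt ((k.1 : ℝ) ^ 2 + (k.2 : ℝ) ^ 2) * Real.sqrt (nsize Λ1 Λ2 k)

variable (Λ1 Λ2 : Finset (ℤ × ℤ))

lemma d_mem (p : Fin 2 × Λ2) (q : Λ1) :
    ((p.2 : ℤ × ℤ) - (q : ℤ × ℤ)) ∈ gammaSet Λ1 Λ2 := by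
  simp only [gammaSet, Finset.mem_image]
  exact ⟨((p.2 : ℤ × ℤ), (q : ℤ × ℤ)), Finset.mem_product.2 ⟨p.2.2, q.2⟩, rfl⟩

lemma nsize_pos {k : ℤ × ℤ} (hk : k ∈ gammaSet Λ1 Λ2) : 0 < nsize Λ1 Λ2 k := by
  obtain ⟨p, hp, rfl⟩ := Finset.mem_image.1 hk
  exact Finset.card_pos.2 ⟨p, Finset.mem_filter.2 ⟨hp, rfl⟩⟩

lemma sqsum_pos {k : ℤ × ℤ} (h0 : k ≠ 0) : 0 < (k.1 : ℝ) ^ 2 + (k.2 : ℝ) ^ 2 := by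
  rcases eq_or_ne k.1 0 with h1 | h1
  · have h2 : k.2 ≠ 0 := fun h2 => h0 (Prod.ext h1 h2)
    have : (0:ℝ) < (k.2:ℝ)^2 := by positivity
    nlinarith [sq_nonneg ((k.1:ℝ))]
  · have : (0:ℝ) < (k.1:ℝ)^2 := by positivity
    nlinarith [sq_nonneg ((k.2:ℝ))]

lemma wt_pos {k : ℤ × ℤ} (hk : k ∈ gammaSet Λ1 Λ2) (h0 : k ≠ 0) :
    0 < wt Λ1 Λ2 k := by
  have h1 := sqsum_pos h0
  have h2 := nsize_pos Λ1 Λ2 hk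
  have h3 : (0:ℝ) < (nsize Λ1 Λ2 k : ℝ) := by exact_mod_cast h2
  exact mul_pos (Real.sqrt_pos.2 h1) (Real.sqrt_pos.2 h3)

lemma wt_sq {k : ℤ × ℤ} (hk : k ∈ gammaSet Λ1 Λ2) :
    (nsize Λ1 Λ2 k : ℝ) * ((k.1 : ℝ) ^ 2 + (k.2 : ℝ) ^ 2) = wt Λ1 Λ2 k ^ 2 := by
  unfold wt
  rw [mul_pow, Real.sq_sqrt (by positivity), Real.sq_sqrt (by positivity)]
  ring

lemma sum_ite_card (k : ℤ × ℤ) (c : ℂ) :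
    (∑ ℓ : Λ2, ∑ q : Λ1, if (ℓ : ℤ × ℤ) - (q : ℤ × ℤ) = k then c else 0)
      = (nsize Λ1 Λ2 k : ℂ) * c := by
  classical
  have h1 : (∑ ℓ : Λ2, ∑ q : Λ1, if (ℓ : ℤ × ℤ) - (q : ℤ × ℤ) = k then c else 0)
      = ∑ ℓ ∈ Λ2, ∑ q ∈ Λ1, if ℓ - q = k then c else 0 := by
    rw [← Finset.sum_coe_sort Λ2 (fun ℓ => ∑ q ∈ Λ1, if ℓ - q = k then c else 0)]
    exact Finset.sum_congr rfl fun ℓ _ =>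
      (Finset.sum_coe_sort Λ1 (fun q => if (ℓ : ℤ × ℤ) - q = k then c else 0))
  rw [h1, ← Finset.sum_product', ← Finset.sum_filter, Finset.sum_const, nsize]
  simp [mul_comm]

lemma Amat_zero : Amat Λ1 Λ2 0 = 0 := by
  funext p q; simp [Amat]

lemma Amat_eq_Tmat {k : ℤ × ℤ} (h0 : k ≠ 0) :
    Amat Λ1 Λ2 k
      = Tmat Λ1 Λ2 (fun v => if v = k then (((wt Λ1 Λ2 k)⁻¹ : ℝ) : ℂ) else 0) := by
  funext p q
  simp only [Amat, Tmat, wt]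
  by_cases hd : (p.2 : ℤ × ℤ) - (q : ℤ × ℤ) = k
  · rw [if_pos ⟨h0, hd⟩, if_pos hd, hd]
    by_cases hi : p.1 = 0 <;> simp [hi] <;> push_cast <;> ring
  · rw [if_neg (by tauto), if_neg hd]
    simp

lemma finner_Tmat_Amat (g : ℤ × ℤ → ℂ) {k : ℤ × ℤ}
    (hk : k ∈ gammaSet Λ1 Λ2) (h0 : k ≠ 0) :
    finner (Tmat Λ1 Λ2 g) (Amat Λ1 Λ2 k) = g k * (wt Λ1 Λ2 k : ℂ) := by
  classical
  have hw : wt Λ1 Λ2 k ≠ 0 := (wt_pos Λ1 Λ2 hk h0).ne'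
  have hwC : (wt Λ1 Λ2 k : ℂ) ≠ 0 := by exact_mod_cast hw
  have keyC : (nsize Λ1 Λ2 k : ℂ) * ((k.1 : ℂ) ^ 2 + (k.2 : ℂ) ^ 2)
      = (wt Λ1 Λ2 k : ℂ) ^ 2 := by
    exact_mod_cast wt_sq Λ1 Λ2 hk
  unfold finner
  rw [Fintype.sum_prod_type]
  have step : ∀ (i : Fin 2) (ℓ : Λ2) (q : Λ1),
      conj (Amat Λ1 Λ2 k (i, ℓ) q) * Tmat Λ1 Λ2 g (i, ℓ) q
        = if (ℓ : ℤ × ℤ) - (q : ℤ × ℤ) = k then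
            ((((if i = 0 then (k.1 : ℝ) else (k.2 : ℝ)) / wt Λ1 Λ2 k : ℝ) : ℂ)
              * ((if i = 0 then (k.1 : ℂ) else (k.2 : ℂ)) * g k)) else 0 := by
    intro i ℓ q
    simp only [Amat, Tmat, wt]
    by_cases hd : (ℓ : ℤ × ℤ) - (q : ℤ × ℤ) = k
    · rw [if_pos ⟨h0, hd⟩, if_pos hd, hd, Complex.conj_ofReal]
    · rw [if_neg (by tauto), if_neg hd]
      simp
  simp only [step]
  have hsum : ∀ i : Fin 2,
      (∑ ℓ : Λ2, ∑ q : Λ1, if (ℓ : ℤ × ℤ) - (q : ℤ × ℤ) = k then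
          ((((if i = 0 then (k.1 : ℝ) else (k.2 : ℝ)) / wt Λ1 Λ2 k : ℝ) : ℂ)
            * ((if i = 0 then (k.1 : ℂ) else (k.2 : ℂ)) * g k)) else 0)
        = (nsize Λ1 Λ2 k : ℂ) *
            ((((if i = 0 then (k.1 : ℝ) else (k.2 : ℝ)) / wt Λ1 Λ2 k : ℝ) : ℂ)
              * ((if i = 0 then (k.1 : ℂ) else (k.2 : ℂ)) * g k)) := fun i =>
    sum_ite_card Λ1 Λ2 k _
  simp only [hsum]
  rw [Fin.sum_univ_two]
  norm_num
  push_cast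
  field_simp
  linear_combination g k * keyC

lemma finner_Amat_ne {j k : ℤ × ℤ} (hjk : j ≠ k) :
    finner (Amat Λ1 Λ2 j) (Amat Λ1 Λ2 k) = 0 := by
  unfold finner
  apply Finset.sum_eq_zero; intro p _
  apply Finset.sum_eq_zero; intro q _
  by_cases hd : (p.2 : ℤ × ℤ) - (q : ℤ × ℤ) = k
  · have hdj : Amat Λ1 Λ2 j p q = 0 := by
      simp only [Amat]
      rw [if_neg]
      rintro ⟨-, hdk⟩
      exact hjk (hdk.symm.trans hd)
    rw [hdj, mul_zero]
  · have : Amat Λ1 Λ2 k p q = 0 := by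
      simp only [Amat]; rw [if_neg (by tauto)]
    rw [this, map_zero, zero_mul]

lemma finner_Amat_self {k : ℤ × ℤ} (hk : k ∈ gammaSet Λ1 Λ2) (h0 : k ≠ 0) :
    finner (Amat Λ1 Λ2 k) (Amat Λ1 Λ2 k) = 1 := by
  have hw : wt Λ1 Λ2 k ≠ 0 := (wt_pos Λ1 Λ2 hk h0).ne'
  have hwC : (wt Λ1 Λ2 k : ℂ) ≠ 0 := by exact_mod_cast hw
  nth_rewrite 1 [Amat_eq_Tmat Λ1 Λ2 h0]
  rw [finner_Tmat_Amat Λ1 Λ2 _ hk h0, if_pos rfl]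
  push_cast
  rw [inv_mul_cancel₀ hwC]

lemma finner_sum_left {ι : Type*} (s : Finset ι)
    (F : ι → Matrix (Fin 2 × Λ2) Λ1 ℂ) (Y : Matrix (Fin 2 × Λ2) Λ1 ℂ) :
    finner (∑ i ∈ s, F i) Y = ∑ i ∈ s, finner (F i) Y := by
  unfold finner
  calc (∑ p : Fin 2 × Λ2, ∑ q : Λ1, conj (Y p q) * (∑ i ∈ s, F i) p q)
      = ∑ p : Fin 2 × Λ2, ∑ i ∈ s, ∑ q : Λ1, conj (Y p q) * F i p q := by
        refine Finset.sum_congr rfl fun p _ => ?_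
        simp only [Matrix.sum_apply, Finset.mul_sum]
        exact Finset.sum_comm
    _ = ∑ i ∈ s, ∑ p : Fin 2 × Λ2, ∑ q : Λ1, conj (Y p q) * F i p q :=
        Finset.sum_comm

lemma finner_smul_left (c : ℂ) (X Y : Matrix (Fin 2 × Λ2) Λ1 ℂ) :
    finner (c • X) Y = c * finner X Y := by
  simp only [finner, Matrix.smul_apply, smul_eq_mul, Finset.mul_sum]
  apply Finset.sum_congr rfl; intro p _
  apply Finset.sum_congr rfl; intro q _
  ring

lemma finner_sub_left (X X' Y : Matrix (Fin 2 × Λ2) Λ1 ℂ) :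
    finner (X - X') Y = finner X Y - finner X' Y := by
  simp only [finner, Matrix.sub_apply, mul_sub, Finset.sum_sub_distrib]

lemma finner_add_left (X X' Y : Matrix (Fin 2 × Λ2) Λ1 ℂ) :
    finner (X + X') Y = finner X Y + finner X' Y := by
  simp only [finner, Matrix.add_apply, mul_add, Finset.sum_add_distrib]

lemma finner_Aproj (Θ : Finset (ℤ × ℤ)) (hΘ : Θ ⊆ gammaSet Λ1 Λ2)
    (X : Matrix (Fin 2 × Λ2) Λ1 ℂ) {j : ℤ × ℤ} (hj : j ∈ Θ) (h0 : j ≠ 0) :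
    finner (Aproj Λ1 Λ2 Θ X) (Amat Λ1 Λ2 j) = finner X (Amat Λ1 Λ2 j) := by
  unfold Aproj
  rw [finner_sum_left, Finset.sum_eq_single_of_mem j hj]
  · rw [finner_smul_left, finner_Amat_self Λ1 Λ2 (hΘ hj) h0, mul_one]
  · intro k _ hkj
    rw [finner_smul_left, finner_Amat_ne Λ1 Λ2 hkj, mul_zero]

lemma Aproj_gamma_eq (X : Matrix (Fin 2 × Λ2) Λ1 ℂ) (h : ℤ × ℤ → ℂ)
    (hh : ∀ k ∈ gammaSet Λ1 Λ2, k ≠ 0 →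
      h k * (wt Λ1 Λ2 k : ℂ) = finner X (Amat Λ1 Λ2 k)) :
    Aproj Λ1 Λ2 (gammaSet Λ1 Λ2) X = Tmat Λ1 Λ2 h := by
  classical
  funext p q
  have hdΓ : ((p.2 : ℤ × ℤ) - (q : ℤ × ℤ)) ∈ gammaSet Λ1 Λ2 := d_mem Λ1 Λ2 p q
  simp only [Aproj, Matrix.sum_apply, Matrix.smul_apply, smul_eq_mul]
  by_cases h0 : ((p.2 : ℤ × ℤ) - (q : ℤ × ℤ)) = 0
  · rw [Finset.sum_eq_zero (fun k _ => ?_)]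
    · show (0:ℂ) = Tmat Λ1 Λ2 h p q
      simp only [Tmat, h0]
      simp
    · have hA : Amat Λ1 Λ2 k p q = 0 := by
        simp only [Amat]
        rw [if_neg]
        rintro ⟨hk0, hdk⟩
        exact hk0 (hdk.symm.trans h0)
      rw [hA, mul_zero]
  · rw [Finset.sum_eq_single_of_mem _ hdΓ (fun k _ hkd => ?_)]
    · rw [← hh _ hdΓ h0]
      have hw : wt Λ1 Λ2 ((p.2 : ℤ × ℤ) - (q : ℤ × ℤ)) ≠ 0 :=
        (wt_pos Λ1 Λ2 hdΓ h0).ne'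
      have hwC : (wt Λ1 Λ2 ((p.2 : ℤ × ℤ) - (q : ℤ × ℤ)) : ℂ) ≠ 0 := by
        exact_mod_cast hw
      have hA : Amat Λ1 Λ2 ((p.2 : ℤ × ℤ) - (q : ℤ × ℤ)) p q
          = (((if p.1 = 0 then (((p.2 : ℤ × ℤ) - (q : ℤ × ℤ)).1 : ℝ)
              else (((p.2 : ℤ × ℤ) - (q : ℤ × ℤ)).2 : ℝ))
            / wt Λ1 Λ2 ((p.2 : ℤ × ℤ) - (q : ℤ × ℤ)) : ℝ) : ℂ) := by
        unfold Amat wt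
        rw [if_pos ⟨h0, rfl⟩]
      rw [hA]
      show _ = Tmat Λ1 Λ2 h p q
      simp only [Tmat]
      by_cases hi : p.1 = 0 <;> simp only [hi, reduceIte, if_neg, if_pos] <;>
        push_cast <;> field_simp <;> ring
    · have hA : Amat Λ1 Λ2 k p q = 0 := by
        simp only [Amat]
        rw [if_neg]
        rintro ⟨-, hdk⟩
        exact hkd hdk.symm
      rw [hA, mul_zero]

lemma Aperp_Tmat (g : ℤ × ℤ → ℂ) : Aperp Λ1 Λ2 (Tmat Λ1 Λ2 g) = 0 := by
  unfold Aperp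
  rw [Aproj_gamma_eq Λ1 Λ2 (Tmat Λ1 Λ2 g) g
    (fun k hk h0 => (finner_Tmat_Amat Λ1 Λ2 g hk h0).symm), sub_self]

end QopAux

open QopAux in
/-- For nonempty `Θ ⊆ Γ`, the constraint `Q_Θ(X) = Q_Θ(T(f̂))` holds
iff `X = T(ĝ)` for some Fourier data `ĝ` agreeing with `f̂` on `Θ \ {(0,0)}`; hence the
lifted problem (11) is equivalent to the original problem (8). -/
theorem Qop_constraint_iff
    (Λ1 Λ2 : Finset (ℤ × ℤ)) (hΛ1 : Λ1.Nonempty) (hΛ2 : Λ2.Nonempty)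
    (fhat : ℤ × ℤ → ℂ)
    (Θ : Finset (ℤ × ℤ)) (hΘne : Θ.Nonempty) (hΘΓ : Θ ⊆ gammaSet Λ1 Λ2)
    (X : Matrix (Fin 2 × Λ2) Λ1 ℂ) :
    Qop Λ1 Λ2 Θ X = Qop Λ1 Λ2 Θ (Tmat Λ1 Λ2 fhat) ↔
      ∃ g : ℤ × ℤ → ℂ, (∀ k ∈ Θ, k ≠ 0 → g k = fhat k) ∧ X = Tmat Λ1 Λ2 g := by
  classical
  set Γ := gammaSet Λ1 Λ2 with hΓdef
  have hΓne : Γ.Nonempty := (hΛ2.product hΛ1).image _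
  have hc : ((Γ.card : ℂ) / (Θ.card : ℂ)) ≠ 0 :=
    div_ne_zero (Nat.cast_ne_zero.2 (Finset.card_ne_zero.2 hΓne))
      (Nat.cast_ne_zero.2 (Finset.card_ne_zero.2 hΘne))
  constructor
  · intro h
    have hcoef : ∀ j ∈ Θ, j ≠ 0 →
        finner X (Amat Λ1 Λ2 j) = finner (Tmat Λ1 Λ2 fhat) (Amat Λ1 Λ2 j) := by
      intro j hj h0
      have h1 := congrArg (fun Z => finner Z (Amat Λ1 Λ2 j)) h
      simp only [Qop, Aperp] at h1
      rw [finner_add_left, finner_add_left, finner_smul_left, finner_smul_left,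
        finner_sub_left, finner_sub_left,
        finner_Aproj Λ1 Λ2 Θ hΘΓ X hj h0,
        finner_Aproj Λ1 Λ2 Θ hΘΓ (Tmat Λ1 Λ2 fhat) hj h0,
        finner_Aproj Λ1 Λ2 Γ (Finset.Subset.refl Γ) X (hΘΓ hj) h0,
        finner_Aproj Λ1 Λ2 Γ (Finset.Subset.refl Γ) (Tmat Λ1 Λ2 fhat) (hΘΓ hj) h0,
        sub_self, sub_self, add_zero, add_zero] at h1
      exact mul_left_cancel₀ hc h1
    have hproj : Aproj Λ1 Λ2 Θ X = Aproj Λ1 Λ2 Θ (Tmat Λ1 Λ2 fhat) := by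
      unfold Aproj
      apply Finset.sum_congr rfl
      intro k hk
      by_cases h0 : k = 0
      · subst h0; rw [Amat_zero]; simp
      · rw [hcoef k hk h0]
    have hperp : Aperp Λ1 Λ2 X = Aperp Λ1 Λ2 (Tmat Λ1 Λ2 fhat) := by
      have h2 := h
      unfold Qop at h2
      rw [hproj] at h2
      exact add_left_cancel h2
    have hXp : X = Aproj Λ1 Λ2 Γ X := by
      have h3 : Aperp Λ1 Λ2 X = 0 := by rw [hperp, Aperp_Tmat]
      unfold Aperp at h3
      exact sub_eq_zero.mp h3
    refine ⟨fun k => if k ∈ Γ ∧ k ≠ 0 then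
        finner X (Amat Λ1 Λ2 k) / (wt Λ1 Λ2 k : ℂ) else fhat k, ?_, ?_⟩
    · intro k hk h0
      have hkΓ : k ∈ Γ := hΘΓ hk
      have hwC : (wt Λ1 Λ2 k : ℂ) ≠ 0 := by
        exact_mod_cast (wt_pos Λ1 Λ2 hkΓ h0).ne'
      show (if k ∈ Γ ∧ k ≠ 0 then finner X (Amat Λ1 Λ2 k) / (wt Λ1 Λ2 k : ℂ)
          else fhat k) = fhat k
      rw [if_pos ⟨hkΓ, h0⟩, hcoef k hk h0, finner_Tmat_Amat Λ1 Λ2 fhat hkΓ h0,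
        mul_div_cancel_right₀ _ hwC]
    · refine hXp.trans (Aproj_gamma_eq Λ1 Λ2 X _ ?_)
      intro k hk h0
      have hwC : (wt Λ1 Λ2 k : ℂ) ≠ 0 := by
        exact_mod_cast (wt_pos Λ1 Λ2 hk h0).ne'
      show (if k ∈ Γ ∧ k ≠ 0 then finner X (Amat Λ1 Λ2 k) / (wt Λ1 Λ2 k : ℂ)
          else fhat k) * (wt Λ1 Λ2 k : ℂ) = finner X (Amat Λ1 Λ2 k)
      rw [if_pos ⟨hk, h0⟩, div_mul_cancel₀ _ hwC]
  · rintro ⟨g, hg, rfl⟩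
    unfold Qop
    rw [Aperp_Tmat, Aperp_Tmat]
    congr 1
    congr 1
    unfold Aproj
    apply Finset.sum_congr rfl
    intro k hk
    by_cases h0 : k = 0
    · subst h0; rw [Amat_zero]; simp
    · rw [finner_Tmat_Amat Λ1 Λ2 g (hΘΓ hk) h0,
        finner_Tmat_Amat Λ1 Λ2 fhat (hΘΓ hk) h0, hg k hk h0]
end
end
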